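/- For all α > 0, r ∈ (0,1), and positive integers n satisfying (ln(π n))/(α r n^r) ≤ 1/14, the remainder bound |r_n| ≤ ∑_{k=1}^∞ ∑_{v=(2k+1)n−k}^∞ e^{-α v^r} < (636/(169π)) · e^{-α n^r} holds, where r_n denotes any quantity bounded in absolute value by the stated double sum. -/

import Mathlib

lemma my_log_ge {x : ℝ} (hx : 0 < x) : 1 - 1 / x ≤ Real.log x := by
  have h := Real.log_le_sub_one_of_pos (show (0:ℝ) < 1 / x by positivity)
  rw [Real.log_div one_ne_zero (ne_of_gt hx), Real.log_one] at h
  linarith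

lemma my_bern {r y x : ℝ} (hr : 0 < r) (hy : 0 < y) (hxy : y ≤ x) :
    y ^ r * (1 + r * Real.log (x / y)) ≤ x ^ r := by
  have hx : 0 < x := lt_of_lt_of_le hy hxy
  have hq : 0 < x / y := by positivity
  have h1 : x ^ r = y ^ r * (x / y) ^ r := by
    rw [Real.div_rpow hx.le hy.le]
    field_simp
  have h2 : (x / y) ^ r = Real.exp (Real.log (x / y) * r) := Real.rpow_def_of_pos hq r
  have h3 : 1 + r * Real.log (x / y) ≤ (x / y) ^ r := by
    rw [h2]
    have h4 := Real.add_one_le_exp (Real.log (x / y) * r)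
    nlinarith [h4]
  calc y ^ r * (1 + r * Real.log (x / y)) ≤ y ^ r * ((x / y) ^ r) :=
        mul_le_mul_of_nonneg_left h3 (Real.rpow_nonneg hy.le r)
    _ = x ^ r := h1.symm

lemma my_tel {B c : ℝ} (t : ℝ) (ht : 0 ≤ t) (hc : 2 ≤ c) (hB : 14 ≤ B)
    (hBc : B / c ≤ 1 / 14) :
    Real.exp (-B * Real.log ((c + t) / c)) ≤
      Real.exp (1 / 14) * (c / (B - 1)) *
        (Real.exp (-(B - 1) * Real.log ((c + t) / c)) -
         Real.exp (-(B - 1) * Real.log ((c + (t + 1)) / c))) := by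
  have hcpos : (0:ℝ) < c := by linarith
  set x : ℝ := c + t with hxdef
  have hx : c ≤ x := le_add_of_nonneg_right ht
  have hxpos : 0 < x := lt_of_lt_of_le hcpos hx
  have hx1 : 0 < x + 1 := by linarith
  have hxx : c + (t + 1) = x + 1 := by rw [hxdef]; ring
  rw [hxx]
  set L : ℝ := Real.log (x / c) with hLdef
  set L' : ℝ := Real.log ((x + 1) / c) with hL'def
  have e3 : Real.log ((x + 1) / x) = Real.log (x + 1) - Real.log x :=
    Real.log_div (ne_of_gt hx1) (ne_of_gt hxpos)
  have e1 : L = Real.log x - Real.log c := Real.log_div (ne_of_gt hxpos) (ne_of_gt hcpos)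
  have e2 : L' = Real.log (x + 1) - Real.log c := Real.log_div (ne_of_gt hx1) (ne_of_gt hcpos)
  have hd1 : 1 / (x + 1) ≤ L' - L := by
    have h := my_log_ge (show (0:ℝ) < (x + 1) / x by positivity)
    have h2 : 1 - 1 / ((x + 1) / x) = 1 / (x + 1) := by
      rw [one_div_div]; field_simp; ring
    rw [e3] at h
    rw [e1, e2]
    linarith [h2 ▸ h]
  have hd2 : L' - L ≤ 1 / c := by
    have h := Real.log_le_sub_one_of_pos (show (0:ℝ) < (x + 1) / x by positivity)
    rw [e3] at h
    have h2 : (x + 1) / x - 1 = 1 / x := by field_simp; ring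
    have h3 : 1 / x ≤ 1 / c := one_div_le_one_div_of_le hcpos hx
    rw [e1, e2]
    linarith
  have hB1 : (0:ℝ) < B - 1 := by linarith
  have hBpos : (0:ℝ) < B := by linarith
  -- step 1
  have hsplit : Real.exp (-(B - 1) * L) =
      Real.exp (-(B - 1) * L') * Real.exp ((B - 1) * (L' - L)) := by
    rw [← Real.exp_add]; ring_nf
  have hexp : 1 + (B - 1) * (L' - L) ≤ Real.exp ((B - 1) * (L' - L)) := by
    have := Real.add_one_le_exp ((B - 1) * (L' - L))
    linarith
  have hmono : 1 + (B - 1) * (1 / (x + 1)) ≤ 1 + (B - 1) * (L' - L) := by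
    nlinarith [hd1, hB1]
  have hpos' : 0 < Real.exp (-(B - 1) * L') := Real.exp_pos _
  have hE : Real.exp (-(B - 1) * L') * (1 + (B - 1) * (1 / (x + 1))) =
      Real.exp (-(B - 1) * L') + Real.exp (-(B - 1) * L') * ((B - 1) * (1 / (x + 1))) := by
    ring
  have step1 : Real.exp (-(B - 1) * L') * ((B - 1) * (1 / (x + 1))) ≤
      Real.exp (-(B - 1) * L) - Real.exp (-(B - 1) * L') := by
    have h := mul_le_mul_of_nonneg_left (le_trans hmono hexp) hpos'.le
    rw [hE] at h
    rw [hsplit]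
    nlinarith [h]
  -- step 2
  have hinv : Real.exp (-L') = c / (x + 1) := by
    have hL : -L' = Real.log (c / (x + 1)) := by
      rw [hL'def, ← Real.log_inv]
      congr 1
      rw [inv_div]
    rw [hL, Real.exp_log (by positivity)]
  have step2 : Real.exp (-(B - 1) * L') * (c / (x + 1)) = Real.exp (-B * L') := by
    rw [← hinv, ← Real.exp_add]; ring_nf
  -- step 3
  have step3 : Real.exp (-B * L) ≤ Real.exp (1 / 14) * Real.exp (-B * L') := by
    rw [← Real.exp_add]
    apply Real.exp_le_exp.mpr
    have h5 : B * (L' - L) ≤ 1 / 14 := by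
      have h6 := mul_le_mul_of_nonneg_left hd2 hBpos.le
      have h7 : B * (1 / c) = B / c := by ring
      linarith [h7 ▸ h6]
    nlinarith [h5]
  -- combine
  calc Real.exp (-B * L) ≤ Real.exp (1 / 14) * Real.exp (-B * L') := step3
    _ = Real.exp (1 / 14) * (Real.exp (-(B - 1) * L') * (c / (x + 1))) := by rw [step2]
    _ = Real.exp (1 / 14) * (c / (B - 1)) *
          (Real.exp (-(B - 1) * L') * ((B - 1) * (1 / (x + 1)))) := by
        field_simp
    _ ≤ Real.exp (1 / 14) * (c / (B - 1)) *
          (Real.exp (-(B - 1) * L) - Real.exp (-(B - 1) * L')) := by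
        apply mul_le_mul_of_nonneg_left step1
        have : (0:ℝ) ≤ c / (B - 1) := le_of_lt (div_pos hcpos hB1)
        positivity

set_option maxHeartbeats 2000000 in
theorem remainder_bound (α r : ℝ) (hα : 0 < α) (hr0 : 0 < r) (hr1 : r < 1)
    (n : ℕ) (hn : 1 ≤ n)
    (hlog : Real.log (Real.pi * n) / (α * r * (n : ℝ) ^ r) ≤ 1 / 14)
    (hcond : 1 / (α * r * (n : ℝ) ^ r) + α * r / (n : ℝ) ^ (1 - r) ≤ 1 / 14)
    (rn : ℝ)
    (hrn : |rn| ≤ ∑' k : ℕ, ∑' v : ℕ,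
      Real.exp (-α * ((((2 * (k + 1) + 1) * n - (k + 1) + v : ℕ) : ℝ)) ^ r)) :
    (∑' k : ℕ, ∑' v : ℕ,
        Real.exp (-α * ((((2 * (k + 1) + 1) * n - (k + 1) + v : ℕ) : ℝ)) ^ r))
        < 636 / (169 * Real.pi) * Real.exp (-α * (n : ℝ) ^ r) ∧
      |rn| < 636 / (169 * Real.pi) * Real.exp (-α * (n : ℝ) ^ r) := by
  have hπ : (0:ℝ) < Real.pi := Real.pi_pos
  have hN1 : (1:ℝ) ≤ (n:ℝ) := by exact_mod_cast hn
  have hN0 : (0:ℝ) < (n:ℝ) := by linarith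
  have hαr : 0 < α * r := mul_pos hα hr0
  have hNr : (0:ℝ) < (n:ℝ) ^ r := Real.rpow_pos_of_pos hN0 r
  have hApos : 0 < α * r * (n:ℝ) ^ r := mul_pos hαr hNr
  have hN1r : (0:ℝ) < (n:ℝ) ^ (1 - r) := Real.rpow_pos_of_pos hN0 (1 - r)
  have hp1 : 0 < 1 / (α * r * (n:ℝ) ^ r) := by positivity
  have hp2 : 0 < α * r / (n:ℝ) ^ (1 - r) := by positivity
  have h1A : 1 / (α * r * (n:ℝ) ^ r) ≤ 1 / 14 := by linarith
  have hA14 : 14 ≤ α * r * (n:ℝ) ^ r := by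
    rw [div_le_div_iff₀ hApos (by norm_num : (0:ℝ) < 14)] at h1A
    linarith
  have hc2 : α * r / (n:ℝ) ^ (1 - r) ≤ 1 / 14 := by linarith
  have hNpow : (n:ℝ) ^ ((1:ℝ) - r) = (n:ℝ) / (n:ℝ) ^ r := by
    rw [Real.rpow_sub hN0, Real.rpow_one]
  have hAN : α * r * (n:ℝ) ^ r / (n:ℝ) ≤ 1 / 14 := by
    have h := hc2
    rw [hNpow, div_div_eq_mul_div] at h
    exact h
  have hπN : Real.pi * (n:ℝ) ≤ Real.exp (α * r * (n:ℝ) ^ r / 14) := by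
    have h1 : Real.log (Real.pi * (n:ℝ)) ≤ α * r * (n:ℝ) ^ r / 14 := by
      rw [div_le_div_iff₀ hApos (by norm_num : (0:ℝ) < 14)] at hlog
      linarith
    calc Real.pi * (n:ℝ) = Real.exp (Real.log (Real.pi * (n:ℝ))) :=
          (Real.exp_log (by positivity)).symm
      _ ≤ Real.exp (α * r * (n:ℝ) ^ r / 14) := Real.exp_le_exp.mpr h1
  -- the per-k bound
  have key : ∀ k : ℕ, (∑' v : ℕ,
      Real.exp (-α * ((((2 * (k + 1) + 1) * n - (k + 1) + v : ℕ) : ℝ)) ^ r)) ≤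
      (Real.exp (-α * (n:ℝ) ^ r) * Real.exp (1/14) * (14/13) * ((n:ℝ) ^ ((1:ℝ) - r) / (α * r)) *
        16 * Real.exp (-(α * r * (n:ℝ) ^ r) * Real.log 2)) *
      (1 / ((k:ℝ) + 1) - 1 / ((k:ℝ) + 2)) := by
    intro k
    set ck : ℝ := (2 * (k:ℝ) + 3) * (n:ℝ) - ((k:ℝ) + 1) with hckdef
    have hK0 : (0:ℝ) ≤ (k:ℝ) := Nat.cast_nonneg k
    have hkn : (0:ℝ) ≤ (k:ℝ) * ((n:ℝ) - 1) := mul_nonneg hK0 (by linarith)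
    have hkn2 : (0:ℝ) ≤ (k:ℝ) * (n:ℝ) := mul_nonneg hK0 hN0.le
    have hcklow : ((k:ℝ) + 2) * (n:ℝ) ≤ ck := by
      rw [hckdef]; nlinarith [hkn, hN1]
    have hckup : ck ≤ (2 * (k:ℝ) + 3) * (n:ℝ) := by
      rw [hckdef]; linarith only [hK0]
    have hckN : (n:ℝ) ≤ ck := by nlinarith [hcklow, hkn2, hN0.le]
    have hck2 : (2:ℝ) ≤ ck := by nlinarith [hcklow, hkn2, hN1]
    have hck0 : (0:ℝ) < ck := by linarith
    have hckr : (0:ℝ) < ck ^ r := Real.rpow_pos_of_pos hck0 r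
    have hNrck : (n:ℝ) ^ r ≤ ck ^ r := Real.rpow_le_rpow hN0.le hckN hr0.le
    have hBk14 : 14 ≤ α * r * ck ^ r := by
      have h := mul_le_mul_of_nonneg_left hNrck hαr.le
      nlinarith [hA14, h]
    have hBkpos : 0 < α * r * ck ^ r := by linarith only [hBk14]
    have hBk1 : 0 < α * r * ck ^ r - 1 := by linarith
    have hANlin : α * r * (n:ℝ) ^ r * 14 ≤ (n:ℝ) := by
      rw [div_le_div_iff₀ hN0 (by norm_num : (0:ℝ) < 14)] at hAN
      linarith
    have hBkc : (α * r * ck ^ r) / ck ≤ 1 / 14 := by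
      have h1 : (ck / (n:ℝ)) ^ r ≤ ck / (n:ℝ) := by
        calc (ck / (n:ℝ)) ^ r ≤ (ck / (n:ℝ)) ^ (1:ℝ) :=
              Real.rpow_le_rpow_of_exponent_le (by rw [le_div_iff₀ hN0]; nlinarith [hckN, hN1]) (by linarith)
          _ = ck / (n:ℝ) := Real.rpow_one _
      rw [Real.div_rpow hck0.le hN0.le, div_le_div_iff₀ hNr hN0] at h1
      -- h1 : ck ^ r * n ≤ ck * n ^ r
      rw [div_le_div_iff₀ hck0 (by norm_num : (0:ℝ) < 14)]
      have p1 := mul_le_mul_of_nonneg_left h1 (by positivity : (0:ℝ) ≤ α * r * 14)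
      have p2 := mul_le_mul_of_nonneg_right hANlin hck0.le
      nlinarith only [p1, p2, hN0, mul_pos hN0 hck0]
    have hsub : k + 1 ≤ (2 * (k + 1) + 1) * n := by
      calc k + 1 ≤ (2 * (k + 1) + 1) * 1 := by omega
        _ ≤ (2 * (k + 1) + 1) * n := Nat.mul_le_mul_left _ hn
    have hcast : ∀ v : ℕ, ((((2 * (k + 1) + 1) * n - (k + 1) + v : ℕ)) : ℝ) = ck + (v:ℝ) := by
      intro v
      rw [hckdef]
      push_cast [Nat.cast_sub hsub]
      ring
    set Q : ℝ := Real.exp (-α * (n:ℝ) ^ r) *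
        Real.exp (-(α * r * (n:ℝ) ^ r) * Real.log ((k:ℝ) + 2)) *
        (Real.exp (1/14) * (ck / (α * r * ck ^ r - 1))) with hQdef
    have hQ0 : 0 ≤ Q := by
      rw [hQdef]
      exact mul_nonneg (mul_nonneg (Real.exp_pos _).le (Real.exp_pos _).le)
        (mul_nonneg (Real.exp_pos _).le (div_nonneg hck0.le hBk1.le))
    have hsC : Real.exp (-α * ck ^ r) ≤
        Real.exp (-α * (n:ℝ) ^ r) * Real.exp (-(α * r * (n:ℝ) ^ r) * Real.log ((k:ℝ) + 2)) := by
      rw [← Real.exp_add]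
      apply Real.exp_le_exp.mpr
      have hb := my_bern hr0 hN0 hckN
      have hbb := mul_le_mul_of_nonneg_left hb hα.le
      have hlg : Real.log ((k:ℝ) + 2) ≤ Real.log (ck / (n:ℝ)) := by
        apply Real.log_le_log (by positivity)
        rw [le_div_iff₀ hN0]
        exact hcklow
      have hll := mul_le_mul_of_nonneg_left hlg hApos.le
      nlinarith only [hbb, hll]
    set g : ℕ → ℝ := fun v : ℕ =>
        Real.exp (-(α * r * ck ^ r - 1) * Real.log ((ck + (v:ℝ)) / ck)) with hg
    have hgsucc : ∀ v : ℕ,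
        Real.exp (-(α * r * ck ^ r - 1) * Real.log ((ck + ((v:ℝ) + 1)) / ck)) = g (v + 1) := by
      intro v
      rw [hg]
      simp only [Nat.cast_add, Nat.cast_one]
    have hterm : ∀ v : ℕ, Real.exp (-α * (ck + (v:ℝ)) ^ r) ≤ Q * (g v - g (v + 1)) := by
      intro v
      have hv0 : (0:ℝ) ≤ (v:ℝ) := Nat.cast_nonneg v
      have s1 : Real.exp (-α * (ck + (v:ℝ)) ^ r) ≤
          Real.exp (-α * ck ^ r) *
            Real.exp (-(α * r * ck ^ r) * Real.log ((ck + (v:ℝ)) / ck)) := by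
        rw [← Real.exp_add]
        apply Real.exp_le_exp.mpr
        have hb := my_bern hr0 hck0 (le_add_of_nonneg_right hv0)
        have hbb := mul_le_mul_of_nonneg_left hb hα.le
        nlinarith only [hbb]
      have tel := my_tel (B := α * r * ck ^ r) (c := ck) (v:ℝ) hv0 hck2 hBk14 hBkc
      rw [hgsucc v] at tel
      have hgv : Real.exp (-(α * r * ck ^ r - 1) * Real.log ((ck + (v:ℝ)) / ck)) = g v := by
        rw [hg]
      rw [hgv] at tel
      have htelnn : 0 ≤ Real.exp (1/14) * (ck / (α * r * ck ^ r - 1)) * (g v - g (v + 1)) :=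
        le_trans (Real.exp_pos _).le tel
      calc Real.exp (-α * (ck + (v:ℝ)) ^ r)
          ≤ Real.exp (-α * ck ^ r) *
              Real.exp (-(α * r * ck ^ r) * Real.log ((ck + (v:ℝ)) / ck)) := s1
        _ ≤ Real.exp (-α * ck ^ r) *
              (Real.exp (1/14) * (ck / (α * r * ck ^ r - 1)) * (g v - g (v + 1))) :=
            mul_le_mul_of_nonneg_left tel (Real.exp_pos _).le
        _ ≤ (Real.exp (-α * (n:ℝ) ^ r) *
              Real.exp (-(α * r * (n:ℝ) ^ r) * Real.log ((k:ℝ) + 2))) *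
              (Real.exp (1/14) * (ck / (α * r * ck ^ r - 1)) * (g v - g (v + 1))) :=
            mul_le_mul_of_nonneg_right hsC htelnn
        _ = Q * (g v - g (v + 1)) := by rw [hQdef]; ring
    have hpart : ∀ V : ℕ, ∑ v ∈ Finset.range V,
        Real.exp (-α * ((((2 * (k + 1) + 1) * n - (k + 1) + v : ℕ) : ℝ)) ^ r) ≤ Q := by
      intro V
      have hg0 : g 0 = 1 := by
        rw [hg]
        simp [div_self (ne_of_gt hck0)]
      have hgV : 0 ≤ g V := by
        rw [hg]
        exact (Real.exp_pos _).le
      calc ∑ v ∈ Finset.range V,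
            Real.exp (-α * ((((2 * (k + 1) + 1) * n - (k + 1) + v : ℕ) : ℝ)) ^ r)
          ≤ ∑ v ∈ Finset.range V, Q * (g v - g (v + 1)) := by
            apply Finset.sum_le_sum
            intro v _
            rw [hcast v]
            exact hterm v
        _ = Q * (g 0 - g V) := by rw [← Finset.mul_sum, Finset.sum_range_sub' g V]
        _ ≤ Q * 1 := by
            apply mul_le_mul_of_nonneg_left _ hQ0
            rw [hg0]
            linarith
        _ = Q := mul_one _
    have hsummable : Summable (fun v : ℕ =>
        Real.exp (-α * ((((2 * (k + 1) + 1) * n - (k + 1) + v : ℕ) : ℝ)) ^ r)) :=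
      summable_of_sum_range_le (fun v => (Real.exp_pos _).le) hpart
    have htsum : (∑' v : ℕ,
        Real.exp (-α * ((((2 * (k + 1) + 1) * n - (k + 1) + v : ℕ) : ℝ)) ^ r)) ≤ Q :=
      Summable.tsum_le_of_sum_range_le hsummable hpart
    -- stage D
    have hckpow : ck ^ ((1:ℝ) - r) = ck / ck ^ r := by
      rw [Real.rpow_sub hck0, Real.rpow_one]
    have hQD : ck / (α * r * ck ^ r - 1) ≤
        14 / 13 * ((2 * (k:ℝ) + 3) * ((n:ℝ) ^ ((1:ℝ) - r) / (α * r))) := by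
      have hstepa : ck / (α * r * ck ^ r - 1) ≤ 14 / 13 * (ck / (α * r * ck ^ r)) := by
        have he : 14 / 13 * (ck / (α * r * ck ^ r)) = 14 * ck / (13 * (α * r * ck ^ r)) := by
          ring
        rw [he, div_le_div_iff₀ hBk1 (by linarith only [hBkpos] : (0:ℝ) < 13 * (α * r * ck ^ r))]
        nlinarith only [hck0, hBk14]
      have hstepb : ck / (α * r * ck ^ r) = ck ^ ((1:ℝ) - r) / (α * r) := by
        rw [hckpow, div_div]
        ring_nf
      have h1r : (0:ℝ) ≤ 1 - r := by linarith
      have hc1 : ck ^ ((1:ℝ) - r) ≤ ((2 * (k:ℝ) + 3) * (n:ℝ)) ^ ((1:ℝ) - r) :=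
        Real.rpow_le_rpow hck0.le hckup h1r
      have hc2' : ((2 * (k:ℝ) + 3) * (n:ℝ)) ^ ((1:ℝ) - r) =
          (2 * (k:ℝ) + 3) ^ ((1:ℝ) - r) * (n:ℝ) ^ ((1:ℝ) - r) :=
        Real.mul_rpow (by positivity) hN0.le
      have hc3 : (2 * (k:ℝ) + 3) ^ ((1:ℝ) - r) ≤ 2 * (k:ℝ) + 3 := by
        calc (2 * (k:ℝ) + 3) ^ ((1:ℝ) - r) ≤ (2 * (k:ℝ) + 3) ^ (1:ℝ) :=
              Real.rpow_le_rpow_of_exponent_le (by linarith) (by linarith)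
          _ = 2 * (k:ℝ) + 3 := Real.rpow_one _
      have hc4 : ck ^ ((1:ℝ) - r) ≤ (2 * (k:ℝ) + 3) * (n:ℝ) ^ ((1:ℝ) - r) := by
        rw [hc2'] at hc1
        have h := mul_le_mul_of_nonneg_right hc3 (Real.rpow_nonneg hN0.le ((1:ℝ) - r))
        linarith
      have h5 : ck ^ ((1:ℝ) - r) / (α * r) ≤ (2 * (k:ℝ) + 3) * (n:ℝ) ^ ((1:ℝ) - r) / (α * r) := by
        rw [div_eq_mul_inv, div_eq_mul_inv]
        exact mul_le_mul_of_nonneg_right hc4 (inv_nonneg.mpr hαr.le)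
      calc ck / (α * r * ck ^ r - 1) ≤ 14 / 13 * (ck / (α * r * ck ^ r)) := hstepa
        _ = 14 / 13 * (ck ^ ((1:ℝ) - r) / (α * r)) := by rw [hstepb]
        _ ≤ 14 / 13 * ((2 * (k:ℝ) + 3) * ((n:ℝ) ^ ((1:ℝ) - r) / (α * r))) := by
            rw [mul_div_assoc] at h5
            exact mul_le_mul_of_nonneg_left h5 (by norm_num)
    -- stage E
    have hQE : (2 * (k:ℝ) + 3) * Real.exp (-(α * r * (n:ℝ) ^ r) * Real.log ((k:ℝ) + 2)) ≤
        16 * Real.exp (-(α * r * (n:ℝ) ^ r) * Real.log 2) *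
          (1 / ((k:ℝ) + 1) - 1 / ((k:ℝ) + 2)) := by
      have e1 : Real.exp (-(α * r * (n:ℝ) ^ r) * Real.log ((k:ℝ) + 2)) =
          Real.exp (-(α * r * (n:ℝ) ^ r - 14) * Real.log ((k:ℝ) + 2)) *
            Real.exp (-14 * Real.log ((k:ℝ) + 2)) := by
        rw [← Real.exp_add]
        ring_nf
      have hlg2 : Real.log 2 ≤ Real.log ((k:ℝ) + 2) :=
        Real.log_le_log (by norm_num) (by linarith)
      have hlg2nn : 0 ≤ Real.log 2 := Real.log_nonneg (by norm_num)
      have e2 : Real.exp (-(α * r * (n:ℝ) ^ r - 14) * Real.log ((k:ℝ) + 2)) ≤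
          Real.exp (-(α * r * (n:ℝ) ^ r - 14) * Real.log 2) := by
        apply Real.exp_le_exp.mpr
        nlinarith only [hlg2, hA14]
      have e4 : Real.exp ((14:ℝ) * Real.log 2) = 16384 := by
        rw [show (14:ℝ) * Real.log 2 = ((14:ℕ):ℝ) * Real.log 2 by norm_num,
          Real.exp_nat_mul, Real.exp_log (by norm_num : (0:ℝ) < 2)]
        norm_num
      have e3 : Real.exp (-(α * r * (n:ℝ) ^ r - 14) * Real.log 2) =
          16384 * Real.exp (-(α * r * (n:ℝ) ^ r) * Real.log 2) := by
        rw [← e4, ← Real.exp_add]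
        ring_nf
      have e5 : Real.exp (-14 * Real.log ((k:ℝ) + 2)) = (((k:ℝ) + 2) ^ (14:ℕ))⁻¹ := by
        rw [show (-14 : ℝ) * Real.log ((k:ℝ) + 2) = -(((14:ℕ):ℝ) * Real.log ((k:ℝ) + 2)) by
            norm_num,
          Real.exp_neg, Real.exp_nat_mul, Real.exp_log (by linarith : (0:ℝ) < (k:ℝ) + 2)]
      have hpoly : (2 * (k:ℝ) + 3) * 16384 * (((k:ℝ) + 1) * ((k:ℝ) + 2)) ≤
          16 * ((k:ℝ) + 2) ^ (14:ℕ) := by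
        have h11 : (2048:ℝ) ≤ ((k:ℝ) + 2) ^ (11:ℕ) := by
          calc (2048:ℝ) = 2 ^ (11:ℕ) := by norm_num
            _ ≤ ((k:ℝ) + 2) ^ (11:ℕ) := pow_le_pow_left₀ (by norm_num) (by linarith) 11
        have h3nn : (0:ℝ) ≤ ((k:ℝ) + 2) ^ (3:ℕ) := pow_nonneg (by linarith) 3
        have ha : (2 * (k:ℝ) + 3) * 16384 * (((k:ℝ) + 1) * ((k:ℝ) + 2)) ≤
            32768 * ((k:ℝ) + 2) ^ (3:ℕ) := by nlinarith only [hK0, sq_nonneg (k:ℝ)]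
        have hc : (32768:ℝ) * ((k:ℝ) + 2) ^ (3:ℕ) ≤
            16 * (((k:ℝ) + 2) ^ (3:ℕ) * ((k:ℝ) + 2) ^ (11:ℕ)) := by nlinarith only [h11, h3nn]
        have hdd : 16 * (((k:ℝ) + 2) ^ (3:ℕ) * ((k:ℝ) + 2) ^ (11:ℕ)) =
            16 * ((k:ℝ) + 2) ^ (14:ℕ) := by ring
        linarith
      have hd : 1 / ((k:ℝ) + 1) - 1 / ((k:ℝ) + 2) = 1 / (((k:ℝ) + 1) * ((k:ℝ) + 2)) := by
        rw [div_sub_div _ _ (by positivity : ((k:ℝ) + 1) ≠ 0) (by positivity : ((k:ℝ) + 2) ≠ 0)]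
        ring_nf
      have hrat : (2 * (k:ℝ) + 3) * 16384 * ((((k:ℝ) + 2) ^ (14:ℕ))⁻¹) ≤
          16 * (1 / ((k:ℝ) + 1) - 1 / ((k:ℝ) + 2)) := by
        rw [hd, ← div_eq_mul_inv, mul_one_div,
          div_le_div_iff₀ (by positivity) (by positivity)]
        linarith only [hpoly]
      calc (2 * (k:ℝ) + 3) * Real.exp (-(α * r * (n:ℝ) ^ r) * Real.log ((k:ℝ) + 2))
          = (2 * (k:ℝ) + 3) * (Real.exp (-(α * r * (n:ℝ) ^ r - 14) * Real.log ((k:ℝ) + 2)) *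
              Real.exp (-14 * Real.log ((k:ℝ) + 2))) := by rw [← e1]
        _ ≤ (2 * (k:ℝ) + 3) * (Real.exp (-(α * r * (n:ℝ) ^ r - 14) * Real.log 2) *
              Real.exp (-14 * Real.log ((k:ℝ) + 2))) := by
            apply mul_le_mul_of_nonneg_left _ (by linarith : (0:ℝ) ≤ 2 * (k:ℝ) + 3)
            exact mul_le_mul_of_nonneg_right e2 (Real.exp_pos _).le
        _ = (2 * (k:ℝ) + 3) * 16384 * ((((k:ℝ) + 2) ^ (14:ℕ))⁻¹) *
              Real.exp (-(α * r * (n:ℝ) ^ r) * Real.log 2) := by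
            rw [e3, e5]
            ring
        _ ≤ 16 * (1 / ((k:ℝ) + 1) - 1 / ((k:ℝ) + 2)) *
              Real.exp (-(α * r * (n:ℝ) ^ r) * Real.log 2) :=
            mul_le_mul_of_nonneg_right hrat (Real.exp_pos _).le
        _ = 16 * Real.exp (-(α * r * (n:ℝ) ^ r) * Real.log 2) *
              (1 / ((k:ℝ) + 1) - 1 / ((k:ℝ) + 2)) := by ring
    -- assemble
    have hCnn : (0:ℝ) ≤ (n:ℝ) ^ ((1:ℝ) - r) / (α * r) :=
      div_nonneg (Real.rpow_nonneg hN0.le _) hαr.le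
    calc (∑' v : ℕ,
          Real.exp (-α * ((((2 * (k + 1) + 1) * n - (k + 1) + v : ℕ) : ℝ)) ^ r)) ≤ Q := htsum
      _ ≤ Real.exp (-α * (n:ℝ) ^ r) *
            Real.exp (-(α * r * (n:ℝ) ^ r) * Real.log ((k:ℝ) + 2)) *
            (Real.exp (1/14) *
              (14 / 13 * ((2 * (k:ℝ) + 3) * ((n:ℝ) ^ ((1:ℝ) - r) / (α * r))))) := by
          rw [hQdef]
          apply mul_le_mul_of_nonneg_left _
            (mul_nonneg (Real.exp_pos _).le (Real.exp_pos _).le)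
          exact mul_le_mul_of_nonneg_left hQD (Real.exp_pos _).le
      _ = (Real.exp (-α * (n:ℝ) ^ r) * Real.exp (1/14) * (14/13) *
            ((n:ℝ) ^ ((1:ℝ) - r) / (α * r))) *
            ((2 * (k:ℝ) + 3) * Real.exp (-(α * r * (n:ℝ) ^ r) * Real.log ((k:ℝ) + 2))) := by
          ring
      _ ≤ (Real.exp (-α * (n:ℝ) ^ r) * Real.exp (1/14) * (14/13) *
            ((n:ℝ) ^ ((1:ℝ) - r) / (α * r))) *
            (16 * Real.exp (-(α * r * (n:ℝ) ^ r) * Real.log 2) *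
              (1 / ((k:ℝ) + 1) - 1 / ((k:ℝ) + 2))) := by
          apply mul_le_mul_of_nonneg_left hQE
          exact mul_nonneg (mul_nonneg (mul_nonneg (Real.exp_pos _).le
            (Real.exp_pos _).le) (by norm_num)) hCnn
      _ = (Real.exp (-α * (n:ℝ) ^ r) * Real.exp (1/14) * (14/13) *
            ((n:ℝ) ^ ((1:ℝ) - r) / (α * r)) * 16 *
            Real.exp (-(α * r * (n:ℝ) ^ r) * Real.log 2)) *
            (1 / ((k:ℝ) + 1) - 1 / ((k:ℝ) + 2)) := by ring
  -- outer summation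
  have hCnn : (0:ℝ) ≤ (n:ℝ) ^ ((1:ℝ) - r) / (α * r) :=
    div_nonneg (Real.rpow_nonneg hN0.le _) hαr.le
  have hM0nn : 0 ≤ Real.exp (-α * (n:ℝ) ^ r) * Real.exp (1/14) * (14/13) *
      ((n:ℝ) ^ ((1:ℝ) - r) / (α * r)) * 16 *
      Real.exp (-(α * r * (n:ℝ) ^ r) * Real.log 2) :=
    mul_nonneg (mul_nonneg (mul_nonneg (mul_nonneg (mul_nonneg
      (Real.exp_pos _).le (Real.exp_pos _).le) (by norm_num)) hCnn) (by norm_num))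
      (Real.exp_pos _).le
  have houter : ∀ K : ℕ, ∑ k ∈ Finset.range K, (∑' v : ℕ,
      Real.exp (-α * ((((2 * (k + 1) + 1) * n - (k + 1) + v : ℕ) : ℝ)) ^ r)) ≤
      Real.exp (-α * (n:ℝ) ^ r) * Real.exp (1/14) * (14/13) *
      ((n:ℝ) ^ ((1:ℝ) - r) / (α * r)) * 16 *
      Real.exp (-(α * r * (n:ℝ) ^ r) * Real.log 2) := by
    intro K
    have hsumd : ∑ k ∈ Finset.range K, (1/((k:ℝ)+1) - 1/((k:ℝ)+2)) = 1 - 1/((K:ℝ)+1) := by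
      induction K with
      | zero => norm_num
      | succ m ih =>
        rw [Finset.sum_range_succ, ih]
        have h1 : ((m:ℝ)+1) ≠ 0 := by positivity
        have h2 : ((m:ℝ)+2) ≠ 0 := by positivity
        push_cast
        field_simp
        ring
    calc ∑ k ∈ Finset.range K, (∑' v : ℕ,
          Real.exp (-α * ((((2 * (k + 1) + 1) * n - (k + 1) + v : ℕ) : ℝ)) ^ r))
        ≤ ∑ k ∈ Finset.range K, (Real.exp (-α * (n:ℝ) ^ r) * Real.exp (1/14) * (14/13) *
            ((n:ℝ) ^ ((1:ℝ) - r) / (α * r)) * 16 *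
            Real.exp (-(α * r * (n:ℝ) ^ r) * Real.log 2)) *
            (1/((k:ℝ)+1) - 1/((k:ℝ)+2)) := Finset.sum_le_sum (fun k _ => key k)
      _ = (Real.exp (-α * (n:ℝ) ^ r) * Real.exp (1/14) * (14/13) *
            ((n:ℝ) ^ ((1:ℝ) - r) / (α * r)) * 16 *
            Real.exp (-(α * r * (n:ℝ) ^ r) * Real.log 2)) * (1 - 1/((K:ℝ)+1)) := by
          rw [← Finset.mul_sum, hsumd]
      _ ≤ (Real.exp (-α * (n:ℝ) ^ r) * Real.exp (1/14) * (14/13) *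
            ((n:ℝ) ^ ((1:ℝ) - r) / (α * r)) * 16 *
            Real.exp (-(α * r * (n:ℝ) ^ r) * Real.log 2)) * 1 := by
          apply mul_le_mul_of_nonneg_left _ hM0nn
          have hK1 : (0:ℝ) < (K:ℝ) + 1 := by positivity
          have h := le_of_lt (one_div_pos.mpr hK1)
          linarith
      _ = Real.exp (-α * (n:ℝ) ^ r) * Real.exp (1/14) * (14/13) *
            ((n:ℝ) ^ ((1:ℝ) - r) / (α * r)) * 16 *
            Real.exp (-(α * r * (n:ℝ) ^ r) * Real.log 2) := mul_one _
  have hSnn : ∀ k : ℕ, 0 ≤ (∑' v : ℕ,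
      Real.exp (-α * ((((2 * (k + 1) + 1) * n - (k + 1) + v : ℕ) : ℝ)) ^ r)) :=
    fun k => tsum_nonneg (fun v => (Real.exp_pos _).le)
  have hS : (∑' k : ℕ, ∑' v : ℕ,
      Real.exp (-α * ((((2 * (k + 1) + 1) * n - (k + 1) + v : ℕ) : ℝ)) ^ r)) ≤
      Real.exp (-α * (n:ℝ) ^ r) * Real.exp (1/14) * (14/13) *
      ((n:ℝ) ^ ((1:ℝ) - r) / (α * r)) * 16 *
      Real.exp (-(α * r * (n:ℝ) ^ r) * Real.log 2) :=
    Summable.tsum_le_of_sum_range_le (summable_of_sum_range_le hSnn houter) houter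
  -- numeric bound
  have hCle : ((n:ℝ) ^ ((1:ℝ) - r) / (α * r)) * Real.exp (-(α * r * (n:ℝ) ^ r) * Real.log 2) ≤
      Real.exp 1 / 16384 * (1 / (14 * Real.pi)) := by
    have hCNA : (n:ℝ) ^ ((1:ℝ) - r) / (α * r) = (n:ℝ) / (α * r * (n:ℝ) ^ r) := by
      rw [hNpow, div_div]
      ring_nf
    have h14A : (n:ℝ) / (α * r * (n:ℝ) ^ r) ≤ (n:ℝ) / 14 := by
      rw [div_le_div_iff₀ hApos (by norm_num : (0:ℝ) < 14)]
      nlinarith only [hA14, hN0]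
    have hNe : (n:ℝ) / 14 ≤ Real.exp (α * r * (n:ℝ) ^ r / 14) * (1 / (14 * Real.pi)) := by
      have hmm := mul_le_mul_of_nonneg_right hπN
        (by positivity : (0:ℝ) ≤ 1 / (14 * Real.pi))
      have he : Real.pi * (n:ℝ) * (1 / (14 * Real.pi)) = (n:ℝ) / 14 := by
        field_simp
      linarith only [hmm, he ▸ hmm]
    have hCN : (n:ℝ) ^ ((1:ℝ) - r) / (α * r) ≤
        Real.exp (α * r * (n:ℝ) ^ r / 14) * (1 / (14 * Real.pi)) := by
      rw [hCNA]
      linarith only [h14A, hNe]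
    have hee : Real.exp (α * r * (n:ℝ) ^ r / 14) *
        Real.exp (-(α * r * (n:ℝ) ^ r) * Real.log 2) ≤ Real.exp 1 / 16384 := by
      rw [← Real.exp_add]
      have hl2 : (0.6931471803:ℝ) < Real.log 2 := Real.log_two_gt_d9
      have harg : α * r * (n:ℝ) ^ r / 14 + (-(α * r * (n:ℝ) ^ r) * Real.log 2) ≤
          1 - 14 * Real.log 2 := by
        nlinarith only [hl2, hA14]
      calc Real.exp (α * r * (n:ℝ) ^ r / 14 + (-(α * r * (n:ℝ) ^ r) * Real.log 2))
          ≤ Real.exp (1 - 14 * Real.log 2) := Real.exp_le_exp.mpr harg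
        _ = Real.exp 1 / 16384 := by
            rw [Real.exp_sub,
              show (14:ℝ) * Real.log 2 = ((14:ℕ):ℝ) * Real.log 2 by norm_num,
              Real.exp_nat_mul, Real.exp_log (by norm_num : (0:ℝ) < 2)]
            norm_num
    have hCEnn : 0 ≤ Real.exp (α * r * (n:ℝ) ^ r / 14) * (1 / (14 * Real.pi)) := by positivity
    calc ((n:ℝ) ^ ((1:ℝ) - r) / (α * r)) * Real.exp (-(α * r * (n:ℝ) ^ r) * Real.log 2)
        ≤ (Real.exp (α * r * (n:ℝ) ^ r / 14) * (1 / (14 * Real.pi))) *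
            Real.exp (-(α * r * (n:ℝ) ^ r) * Real.log 2) :=
          mul_le_mul_of_nonneg_right hCN (Real.exp_pos _).le
      _ = (Real.exp (α * r * (n:ℝ) ^ r / 14) *
            Real.exp (-(α * r * (n:ℝ) ^ r) * Real.log 2)) * (1 / (14 * Real.pi)) := by ring
      _ ≤ (Real.exp 1 / 16384) * (1 / (14 * Real.pi)) :=
          mul_le_mul_of_nonneg_right hee (by positivity)
  have hnum2 : Real.exp (1/14) * (14/13) * 16 * (Real.exp 1 / 16384 * (1 / (14 * Real.pi))) <
      636 / (169 * Real.pi) := by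
    have he1 : Real.exp ((1:ℝ)/14) ≤ Real.exp 1 := Real.exp_le_exp.mpr (by norm_num)
    have he2 : Real.exp 1 < 2.7182818286 := Real.exp_one_lt_d9
    have he3 : 0 < Real.exp 1 := Real.exp_pos 1
    have he4 : 0 < Real.exp ((1:ℝ)/14) := Real.exp_pos _
    rw [lt_div_iff₀ (by positivity : (0:ℝ) < 169 * Real.pi)]
    have hsimp : Real.exp (1/14) * (14/13) * 16 * (Real.exp 1 / 16384 * (1 / (14 * Real.pi))) *
        (169 * Real.pi) = Real.exp (1/14) * Real.exp 1 * (169 * 16 / (13 * 16384)) := by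
      field_simp
    rw [hsimp]
    nlinarith only [he1, he2, he3, he4]
  have hnum : Real.exp (-α * (n:ℝ) ^ r) * Real.exp (1/14) * (14/13) *
      ((n:ℝ) ^ ((1:ℝ) - r) / (α * r)) * 16 *
      Real.exp (-(α * r * (n:ℝ) ^ r) * Real.log 2) <
      636 / (169 * Real.pi) * Real.exp (-α * (n:ℝ) ^ r) := by
    have hmid : Real.exp (1/14) * (14/13) * 16 *
        (((n:ℝ) ^ ((1:ℝ) - r) / (α * r)) *
          Real.exp (-(α * r * (n:ℝ) ^ r) * Real.log 2)) < 636 / (169 * Real.pi) := by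
      calc Real.exp (1/14) * (14/13) * 16 *
            (((n:ℝ) ^ ((1:ℝ) - r) / (α * r)) *
              Real.exp (-(α * r * (n:ℝ) ^ r) * Real.log 2))
          ≤ Real.exp (1/14) * (14/13) * 16 *
            (Real.exp 1 / 16384 * (1 / (14 * Real.pi))) := by
            apply mul_le_mul_of_nonneg_left hCle
            positivity
        _ < 636 / (169 * Real.pi) := hnum2
    calc Real.exp (-α * (n:ℝ) ^ r) * Real.exp (1/14) * (14/13) *
          ((n:ℝ) ^ ((1:ℝ) - r) / (α * r)) * 16 *
          Real.exp (-(α * r * (n:ℝ) ^ r) * Real.log 2)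
        = Real.exp (-α * (n:ℝ) ^ r) * (Real.exp (1/14) * (14/13) * 16 *
            (((n:ℝ) ^ ((1:ℝ) - r) / (α * r)) *
              Real.exp (-(α * r * (n:ℝ) ^ r) * Real.log 2))) := by ring
      _ < Real.exp (-α * (n:ℝ) ^ r) * (636 / (169 * Real.pi)) :=
          (mul_lt_mul_iff_right₀ (Real.exp_pos _)).mpr hmid
      _ = 636 / (169 * Real.pi) * Real.exp (-α * (n:ℝ) ^ r) := by ring
  have hfin := lt_of_le_of_lt hS hnum
  exact ⟨hfin, lt_of_le_of_lt hrn hfin⟩
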